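/- Let α, β > -1 be real numbers, let n > m > 0 be integers, let p_0,…,p_n ∈ ℝ^d and r_0,…,r_m ∈ ℝ^d, and set P_n(t) := Σ_{i=0}^{n} p_i B_i^n(t), R_m(t) := Σ_{i=0}^{m} r_i B_i^m(t). Then ∫₀¹ (1-t)^α t^β ‖P_n(t) - R_m(t)‖² dt = Σ_{h=1}^{d} { I_{nn}(p^h, p^h) + I_{mm}(r^h, r^h) - 2 I_{nm}(p^h, r^h) }, where p^h := [p_{0h},…,p_{nh}] and r^h := [r_{0h},…,r_{mh}] are the vectors of h-th coordinates, ‖·‖ is the Euclidean norm on ℝ^d, and I_{NM}(a,b) := (B(α+1,β+1)/(α+β+2)_{N+M}) · Σ_{i=0}^{N} Σ_{j=0}^{M} C(N,i) C(M,j) (α+1)_{N+M-i-j} (β+1)_{i+j} a_i b_j. -/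

import Mathlib

open MeasureTheory Polynomial

/-- Bernstein polynomial `B_i^n(t) = C(n,i) t^i (1-t)^{n-i}` as a real function. -/
noncomputable def bern (n i : ℕ) (t : ℝ) : ℝ := (n.choose i : ℝ) * t ^ i * (1 - t) ^ (n - i)

/-- Pochhammer symbol `(a)_k = a(a+1)⋯(a+k-1)`. -/
noncomputable def poch (a : ℝ) (k : ℕ) : ℝ := (ascPochhammer ℝ k).eval a

/-- Beta function `B(x,y) = Γ(x)Γ(y)/Γ(x+y)`. -/
noncomputable def betaFn (x y : ℝ) : ℝ := Real.Gamma x * Real.Gamma y / Real.Gamma (x + y)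

/-- `I_{NM}(a,b)` from the paper. -/
noncomputable def Ifun (α β : ℝ) (N M : ℕ) (a : Fin (N + 1) → ℝ) (b : Fin (M + 1) → ℝ) : ℝ :=
  betaFn (α + 1) (β + 1) / poch (α + β + 2) (N + M) *
    ∑ i : Fin (N + 1), ∑ j : Fin (M + 1),
      (N.choose i : ℝ) * (M.choose j : ℝ) *
        poch (α + 1) (N + M - (i : ℕ) - (j : ℕ)) * poch (β + 1) ((i : ℕ) + (j : ℕ)) *
        a i * b j

section Aux
open intervalIntegral
theorem intInt (x y : ℝ) (hx : -1 < x) (hy : -1 < y) :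
    IntervalIntegrable (fun t : ℝ => t ^ x * (1 - t) ^ y) volume 0 1 := by
  have half : ∀ x y : ℝ, -1 < x →
      IntervalIntegrable (fun t : ℝ => t ^ x * (1 - t) ^ y) volume 0 (1/2) := by
    intro x y hx
    refine (intervalIntegrable_rpow' hx).mul_continuousOn ?_
    refine ContinuousOn.rpow_const (by fun_prop) ?_
    intro t ht
    rw [Set.uIcc_of_le (by norm_num)] at ht
    left; intro h; nlinarith [ht.1, ht.2]
  refine (half x y hx).trans ?_
  have h2 := ((half y x hy).comp_sub_left 1).symm
  norm_num at h2
  simpa [mul_comm] using h2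


theorem betaInt (x y : ℝ) (hx : 0 < x) (hy : 0 < y) :
    ∫ t in (0:ℝ)..1, t ^ (x - 1) * (1 - t) ^ (y - 1) = betaFn x y := by
  have key := Complex.Gamma_mul_Gamma_eq_betaIntegral (s := x) (t := y)
    (by simpa using hx) (by simpa using hy)
  have hG : Complex.Gamma (↑x + ↑y) ≠ 0 := by
    rw [← Complex.ofReal_add, Complex.Gamma_ofReal]
    exact_mod_cast (Real.Gamma_pos_of_pos (by linarith : (0:ℝ) < x + y)).ne'
  have hbeta : Complex.betaIntegral x y = ((betaFn x y : ℝ) : ℂ) := by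
    have : Complex.betaIntegral x y =
        Complex.Gamma x * Complex.Gamma y / Complex.Gamma (↑x + ↑y) := by
      field_simp; linear_combination -key
    rw [this, ← Complex.ofReal_add, Complex.Gamma_ofReal, Complex.Gamma_ofReal,
      Complex.Gamma_ofReal, betaFn]
    push_cast
    ring
  have heq : Complex.betaIntegral x y =
      ((∫ t in (0:ℝ)..1, t ^ (x - 1) * (1 - t) ^ (y - 1) : ℝ) : ℂ) := by
    rw [Complex.betaIntegral, ← intervalIntegral.integral_ofReal]
    refine intervalIntegral.integral_congr_ae ?_
    have h1 : ∀ᵐ t : ℝ, t ≠ 1 := by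
      simp only [ae_iff]
      simpa using measure_singleton (1:ℝ)
    filter_upwards [h1] with t ht1 htI
    rw [Set.uIoc_of_le (by norm_num : (0:ℝ) ≤ 1)] at htI
    have h0 : 0 < t := htI.1
    have h1' : t < 1 := lt_of_le_of_ne htI.2 ht1
    rw [Complex.ofReal_mul, Complex.ofReal_cpow h0.le, Complex.ofReal_cpow (by linarith),
      Complex.ofReal_sub, Complex.ofReal_sub, Complex.ofReal_one]
    push_cast
    ring_nf
  rw [heq] at hbeta
  exact_mod_cast hbeta


theorem poch_pos {a : ℝ} (ha : 0 < a) (k : ℕ) : 0 < poch a k := by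
  induction k with
  | zero => simp [poch]
  | succ n ih =>
    rw [poch, ascPochhammer_succ_right] at *
    simp only [Polynomial.eval_mul, Polynomial.eval_add, Polynomial.eval_X,
      Polynomial.eval_natCast]
    exact mul_pos ih (by positivity)

theorem Gamma_add_nat {a : ℝ} (ha : 0 < a) (k : ℕ) :
    Real.Gamma (a + k) = poch a k * Real.Gamma a := by
  induction k with
  | zero => simp [poch]
  | succ n ih =>
    have : a + (n + 1 : ℕ) = (a + n) + 1 := by push_cast; ring
    rw [this, Real.Gamma_add_one (by positivity), ih, poch, poch,
      ascPochhammer_succ_right]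
    simp only [Polynomial.eval_mul, Polynomial.eval_add, Polynomial.eval_X,
      Polynomial.eval_natCast]
    ring

theorem betaFn_shift {x y : ℝ} (hx : 0 < x) (hy : 0 < y) (k l : ℕ) :
    betaFn (x + k) (y + l) = betaFn x y * poch x k * poch y l / poch (x + y) (k + l) := by
  rw [betaFn, betaFn, Gamma_add_nat hx, Gamma_add_nat hy]
  have : x + k + (y + l) = (x + y) + (k + l : ℕ) := by push_cast; ring
  rw [this, Gamma_add_nat (by linarith)]
  have h1 := (Real.Gamma_pos_of_pos (by linarith : (0:ℝ) < x + y)).ne'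
  have h2 := (poch_pos (by linarith : (0:ℝ) < x + y) (k + l)).ne'
  field_simp


theorem term_aeq (α β : ℝ) (N M i j : ℕ) (hi : i ≤ N) (hj : j ≤ M) :
    ∀ᵐ t : ℝ, t ∈ Set.uIoc (0:ℝ) 1 →
      (1 - t) ^ α * t ^ β * (bern N i t * bern M j t) =
      ((N.choose i : ℝ) * (M.choose j : ℝ)) *
        (t ^ ((β + 1 + ((i : ℝ) + j)) - 1) *
          (1 - t) ^ ((α + 1 + (N + M - i - j : ℕ)) - 1)) := by
  have h1 : ∀ᵐ t : ℝ, t ≠ 1 := by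
    simp only [ae_iff]
    simpa using measure_singleton (1:ℝ)
  filter_upwards [h1] with t ht1 htI
  rw [Set.uIoc_of_le (by norm_num : (0:ℝ) ≤ 1)] at htI
  have h0 : 0 < t := htI.1
  have h1' : t < 1 := lt_of_le_of_ne htI.2 ht1
  have hsub : (N + M - i - j : ℕ) = (N - i) + (M - j) := by omega
  rw [bern, bern, hsub]
  rw [show (β + 1 + ((i : ℝ) + j)) - 1 = β + ((i + j : ℕ) : ℝ) by push_cast; ring,
    show (α + 1 + (((N - i) + (M - j) : ℕ) : ℝ)) - 1 = α + (((N - i) + (M - j) : ℕ) : ℝ) by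
      push_cast; ring]
  rw [Real.rpow_add h0, Real.rpow_add (by linarith : (0:ℝ) < 1 - t),
    Real.rpow_natCast, Real.rpow_natCast, pow_add, pow_add]
  ring

theorem term_int (α β : ℝ) (hα : -1 < α) (hβ : -1 < β) (N M i j : ℕ) (hi : i ≤ N) (hj : j ≤ M) :
    IntervalIntegrable (fun t => (1 - t) ^ α * t ^ β * (bern N i t * bern M j t)) volume 0 1 ∧
    (∫ t in (0:ℝ)..1, (1 - t) ^ α * t ^ β * (bern N i t * bern M j t)) =
      betaFn (α + 1) (β + 1) / poch (α + β + 2) (N + M) *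
        ((N.choose i : ℝ) * (M.choose j : ℝ) *
          poch (α + 1) (N + M - i - j) * poch (β + 1) (i + j)) := by
  set x : ℝ := β + 1 + ((i : ℝ) + j) with hxdef
  set y : ℝ := α + 1 + (N + M - i - j : ℕ) with hydef
  have hx : 0 < x := by have : (0:ℝ) ≤ (i:ℝ) + j := by positivity
                        simp only [hxdef]; linarith
  have hy : 0 < y := by have : (0:ℝ) ≤ ((N + M - i - j : ℕ) : ℝ) := by positivity
                        simp only [hydef]; linarith
  have haeq := term_aeq α β N M i j hi hj
  have hii : IntervalIntegrable
      (fun t : ℝ => ((N.choose i : ℝ) * (M.choose j : ℝ)) * (t ^ (x - 1) * (1 - t) ^ (y - 1)))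
      volume 0 1 := (intInt (x - 1) (y - 1) (by linarith) (by linarith)).const_mul _
  constructor
  · exact hii.congr_ae (Filter.EventuallyEq.symm ((ae_restrict_iff' measurableSet_uIoc).2 haeq))
  · rw [intervalIntegral.integral_congr_ae haeq, intervalIntegral.integral_const_mul,
      betaInt x y hx hy]
    have hbs : betaFn x y = betaFn (β + 1) (α + 1) * poch (β + 1) (i + j) *
        poch (α + 1) (N + M - i - j) / poch (α + β + 2) ((i + j) + (N + M - i - j)) := by
      have := betaFn_shift (x := β + 1) (y := α + 1) (by linarith) (by linarith)
        (i + j) (N + M - i - j)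
      push_cast at this
      rw [show β + 1 + (α + 1) = α + β + 2 by ring] at this
      rw [hxdef, hydef]
      push_cast
      rw [this]
    rw [hbs, show (i + j) + (N + M - i - j) = N + M by omega]
    have hsym : betaFn (β + 1) (α + 1) = betaFn (α + 1) (β + 1) := by
      rw [betaFn, betaFn, add_comm (β+1), mul_comm]
    rw [hsym]; ring

set_option maxHeartbeats 1000000 in
theorem key (α β : ℝ) (hα : -1 < α) (hβ : -1 < β) (N M : ℕ)
    (a : Fin (N + 1) → ℝ) (b : Fin (M + 1) → ℝ) :
    IntervalIntegrable (fun t => (1 - t) ^ α * t ^ β *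
      ((∑ i : Fin (N + 1), a i * bern N i t) * (∑ j : Fin (M + 1), b j * bern M j t)))
      volume 0 1 ∧
    (∫ t in (0:ℝ)..1, (1 - t) ^ α * t ^ β *
      ((∑ i : Fin (N + 1), a i * bern N i t) * (∑ j : Fin (M + 1), b j * bern M j t))) =
      Ifun α β N M a b := by
  have hpt : (fun t : ℝ => (1 - t) ^ α * t ^ β *
      ((∑ i : Fin (N + 1), a i * bern N i t) * (∑ j : Fin (M + 1), b j * bern M j t))) =
      fun t : ℝ => ∑ q : Fin (N + 1) × Fin (M + 1),
        (a q.1 * b q.2) * ((1 - t) ^ α * t ^ β * (bern N q.1 t * bern M q.2 t)) := by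
    funext t
    rw [Fintype.sum_prod_type, Finset.sum_mul_sum]
    rw [Finset.mul_sum]
    refine Finset.sum_congr rfl fun i _ => ?_
    rw [Finset.mul_sum]
    refine Finset.sum_congr rfl fun j _ => ?_
    ring
  have hint : ∀ q : Fin (N + 1) × Fin (M + 1), IntervalIntegrable
      (fun t : ℝ => (a q.1 * b q.2) * ((1 - t) ^ α * t ^ β * (bern N q.1 t * bern M q.2 t)))
      volume 0 1 := fun q =>
    ((term_int α β hα hβ N M q.1 q.2 (Nat.lt_succ_iff.1 q.1.2) (Nat.lt_succ_iff.1 q.2.2)).1).const_mul _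
  constructor
  · rw [hpt]
    have h := IntervalIntegrable.sum (μ := volume) (a := 0) (b := 1) Finset.univ
      (f := fun (q : Fin (N + 1) × Fin (M + 1)) (t : ℝ) =>
        (a q.1 * b q.2) * ((1 - t) ^ α * t ^ β * (bern N q.1 t * bern M q.2 t)))
      (fun q _ => hint q)
    have he : (∑ q : Fin (N + 1) × Fin (M + 1), fun t : ℝ =>
        (a q.1 * b q.2) * ((1 - t) ^ α * t ^ β * (bern N q.1 t * bern M q.2 t))) =
        fun t : ℝ => ∑ q : Fin (N + 1) × Fin (M + 1),
          (a q.1 * b q.2) * ((1 - t) ^ α * t ^ β * (bern N q.1 t * bern M q.2 t)) := by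
      funext t; simp
    rwa [he] at h
  · rw [hpt]
    rw [intervalIntegral.integral_finset_sum (fun q _ => hint q)]
    have : ∀ q : Fin (N + 1) × Fin (M + 1),
        (∫ t in (0:ℝ)..1, (a q.1 * b q.2) *
          ((1 - t) ^ α * t ^ β * (bern N q.1 t * bern M q.2 t))) =
        (a q.1 * b q.2) * (betaFn (α + 1) (β + 1) / poch (α + β + 2) (N + M) *
          ((N.choose q.1 : ℝ) * (M.choose q.2 : ℝ) *
            poch (α + 1) (N + M - q.1 - q.2) * poch (β + 1) (q.1 + q.2))) := by
      intro q
      rw [intervalIntegral.integral_const_mul,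
        (term_int α β hα hβ N M q.1 q.2 (Nat.lt_succ_iff.1 q.1.2) (Nat.lt_succ_iff.1 q.2.2)).2]
    rw [Finset.sum_congr rfl fun q _ => this q, Ifun, Finset.mul_sum, Fintype.sum_prod_type]
    refine Finset.sum_congr rfl fun i _ => ?_
    rw [Finset.mul_sum]
    refine Finset.sum_congr rfl fun j _ => ?_
    ring

end Aux

theorem stmt2 (α β : ℝ) (hα : -1 < α) (hβ : -1 < β) (d n m : ℕ) (hm : 0 < m) (hmn : m < n)
    (p : Fin (n + 1) → EuclideanSpace ℝ (Fin d)) (r : Fin (m + 1) → EuclideanSpace ℝ (Fin d)) :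
    (∫ t in (0:ℝ)..1, (1 - t) ^ α * t ^ β *
        ‖(∑ i : Fin (n + 1), bern n i t • p i) - (∑ i : Fin (m + 1), bern m i t • r i)‖ ^ 2) =
      ∑ h : Fin d,
        (Ifun α β n n (fun i => p i h) (fun i => p i h) +
          Ifun α β m m (fun i => r i h) (fun i => r i h) -
          2 * Ifun α β n m (fun i => p i h) (fun i => r i h)) := by
  have hpt : (fun t : ℝ => (1 - t) ^ α * t ^ β *
      ‖(∑ i : Fin (n + 1), bern n i t • p i) - (∑ i : Fin (m + 1), bern m i t • r i)‖ ^ 2) =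
      fun t : ℝ => ∑ h : Fin d,
        ((1 - t) ^ α * t ^ β *
            ((∑ i : Fin (n + 1), p i h * bern n i t) * (∑ j : Fin (n + 1), p j h * bern n j t)) +
          (1 - t) ^ α * t ^ β *
            ((∑ i : Fin (m + 1), r i h * bern m i t) * (∑ j : Fin (m + 1), r j h * bern m j t)) -
          2 * ((1 - t) ^ α * t ^ β *
            ((∑ i : Fin (n + 1), p i h * bern n i t) * (∑ j : Fin (m + 1), r j h * bern m j t)))) := by
    funext t
    have hnorm : ‖(∑ i : Fin (n + 1), bern n i t • p i) - (∑ i : Fin (m + 1), bern m i t • r i)‖ ^ 2 =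
        ∑ h : Fin d, ((∑ i : Fin (n + 1), p i h * bern n i t) -
          (∑ i : Fin (m + 1), r i h * bern m i t)) ^ 2 := by
      rw [EuclideanSpace.norm_eq, Real.sq_sqrt (by positivity)]
      refine Finset.sum_congr rfl fun h _ => ?_
      rw [Real.norm_eq_abs, sq_abs]
      congr 1
      have hsum : ∀ (k : ℕ) (c : Fin (k + 1) → ℝ) (v : Fin (k + 1) → EuclideanSpace ℝ (Fin d)),
          (∑ i : Fin (k + 1), c i • v i) h = ∑ i : Fin (k + 1), v i h * c i := by
        intro k c v
        have h2 := map_sum (EuclideanSpace.proj (𝕜 := ℝ) h) (fun i => c i • v i) Finset.univ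
        simp only [PiLp.proj_apply, PiLp.smul_apply, smul_eq_mul] at h2
        rw [h2]
        exact Finset.sum_congr rfl fun i _ => mul_comm _ _
      rw [PiLp.sub_apply, hsum, hsum]
    rw [hnorm, Finset.mul_sum]
    refine Finset.sum_congr rfl fun h _ => ?_
    ring
  rw [hpt]
  have hP := fun h : Fin d => key α β hα hβ n n (fun i => p i h) (fun i => p i h)
  have hR := fun h : Fin d => key α β hα hβ m m (fun i => r i h) (fun i => r i h)
  have hX := fun h : Fin d => key α β hα hβ n m (fun i => p i h) (fun i => r i h)
  rw [intervalIntegral.integral_finset_sum (fun h _ =>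
    (((hP h).1.add (hR h).1).sub ((hX h).1.const_mul 2)))]
  refine Finset.sum_congr rfl fun h _ => ?_
  rw [intervalIntegral.integral_sub ((hP h).1.add (hR h).1) ((hX h).1.const_mul 2),
    intervalIntegral.integral_add (hP h).1 (hR h).1, intervalIntegral.integral_const_mul,
    (hP h).2, (hR h).2, (hX h).2]
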